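/- For every partition λ and μ ∈ 𝒟(λ), ν ∈ 𝒰(λ), there is a unique cell c_{μ,ν} of λ lying either in the row of the added box ν/λ and the column of the removed box λ/μ, or in the column of ν/λ and the row of λ/μ. -/
import Mathlib


/-- `YDCovers μ λ` means `μ ⋖ λ` in Young's lattice: `μ ⊆ λ` and `|λ| = |μ| + 1`. -/
def YDCovers (μ ν : YoungDiagram) : Prop :=
  μ.cells ⊆ ν.cells ∧ ν.cells.card = μ.cells.card + 1

lemma YD_row_lt_card {l : YoungDiagram} {i j : ℕ} (h : (i, j) ∈ l) :
    i < l.cells.card := by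
  have hsub : (Finset.range (i + 1)).image (fun k => (k, j)) ⊆ l.cells := by
    intro p hp
    simp only [Finset.mem_image, Finset.mem_range] at hp
    obtain ⟨k, hk, rfl⟩ := hp
    simpa [YoungDiagram.mem_cells] using
      l.up_left_mem (Nat.lt_succ_iff.mp hk) le_rfl h
  have hc := Finset.card_le_card hsub
  rwa [Finset.card_image_of_injective _ (fun a b hab => by
      simpa using congrArg Prod.fst hab), Finset.card_range] at hc

lemma YD_col_lt_card {l : YoungDiagram} {i j : ℕ} (h : (i, j) ∈ l) :
    j < l.cells.card := by
  have hsub : (Finset.range (j + 1)).image (fun k => (i, k)) ⊆ l.cells := by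
    intro p hp
    simp only [Finset.mem_image, Finset.mem_range] at hp
    obtain ⟨k, hk, rfl⟩ := hp
    simpa [YoungDiagram.mem_cells] using
      l.up_left_mem le_rfl (Nat.lt_succ_iff.mp hk) h
  have hc := Finset.card_le_card hsub
  rwa [Finset.card_image_of_injective _ (fun a b hab => by
      simpa using congrArg Prod.snd hab), Finset.card_range] at hc

lemma YD_finite_bounded (B : Finset (ℕ × ℕ)) :
    {l : YoungDiagram | l.cells ⊆ B}.Finite := by
  have himg : (YoungDiagram.cells '' {l : YoungDiagram | l.cells ⊆ B}).Finite := by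
    refine Set.Finite.subset (B.powerset : Finset (Finset (ℕ × ℕ))).finite_toSet ?_
    rintro s ⟨l, hl, rfl⟩
    simpa using hl
  refine Set.Finite.of_finite_image himg ?_
  intro a _ b _ hab
  cases a; cases b; simpa using hab

lemma YD_finite_down (l : YoungDiagram) : {m : YoungDiagram | YDCovers m l}.Finite :=
  (YD_finite_bounded l.cells).subset fun _ hm => hm.1

lemma YD_finite_up (l : YoungDiagram) : {n : YoungDiagram | YDCovers l n}.Finite := by
  refine (YD_finite_bounded
    (Finset.range (l.cells.card + 1) ×ˢ Finset.range (l.cells.card + 1))).subset ?_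
  rintro n ⟨_, hcard⟩ c hc
  obtain ⟨i, j⟩ := c
  have hmem : (i, j) ∈ n := by simpa [YoungDiagram.mem_cells] using hc
  have h1 : i < n.cells.card := YD_row_lt_card hmem
  have h2 : j < n.cells.card := YD_col_lt_card hmem
  simp only [Finset.mem_product, Finset.mem_range]
  omega

/-- The set 𝒰(λ) of diagrams covering `l`, as a `Finset`. -/
noncomputable def upFinset (l : YoungDiagram) : Finset YoungDiagram :=
  (YD_finite_up l).toFinset

/-- The set 𝒟(λ) of diagrams covered by `l`, as a `Finset`. -/
noncomputable def downFinset (l : YoungDiagram) : Finset YoungDiagram :=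
  (YD_finite_down l).toFinset

/-- Standard Young tableaux of shape `l`, encoded as saturated chains
`⊥ = T 0 ⋖ T 1 ⋖ ⋯ ⋖ T n = l` in Young's lattice. -/
def SYTset (l : YoungDiagram) : Set (ℕ → YoungDiagram) :=
  {T | T 0 = ⊥ ∧ (∀ i, i < l.cells.card → YDCovers (T i) (T (i + 1))) ∧
    ∀ i, l.cells.card ≤ i → T i = l}

/-- `fTab l` is the number of standard Young tableaux of shape `l`. -/
noncomputable def fTab (l : YoungDiagram) : ℕ := Nat.card (SYTset l)

/-- arm-length of a cell -/
def armLen (l : YoungDiagram) (c : ℕ × ℕ) : ℕ := l.rowLen c.1 - (c.2 + 1)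

/-- leg-length of a cell -/
def legLen (l : YoungDiagram) (c : ℕ × ℕ) : ℕ := l.colLen c.2 - (c.1 + 1)

/-- hook-length of a cell -/
def hookLen (l : YoungDiagram) (c : ℕ × ℕ) : ℕ := armLen l c + legLen l c + 1

/-- product of all hook-lengths of a diagram -/
def Hprod (l : YoungDiagram) : ℕ := ∏ c ∈ l.cells, hookLen l c

/-- For `r ⋖ k`, the unique box of `k / r`. -/
def diffBox (r k : YoungDiagram) : ℕ × ℕ := (k.cells \ r.cells).sup id

/-- Given the removed box `bm = λ/μ` and the added box `bn = ν/λ`, the unique cell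
`c_{μ,ν}` of `λ` in the row of one box and the column of the other. -/
def cellC (l : YoungDiagram) (bm bn : ℕ × ℕ) : ℕ × ℕ :=
  if (bm.1, bn.2) ∈ l.cells then (bm.1, bn.2) else (bn.1, bm.2)

/-- The field ℚ(q,t). -/
abbrev Kqt : Type := FractionRing (MvPolynomial (Fin 2) ℚ)

noncomputable def qq : Kqt := algebraMap (MvPolynomial (Fin 2) ℚ) Kqt (MvPolynomial.X 0)
noncomputable def tt : Kqt := algebraMap (MvPolynomial (Fin 2) ℚ) Kqt (MvPolynomial.X 1)

/-- `[h_κ(c)]^ℓ = 1 - q^{a} t^{ℓ+1}`. -/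
noncomputable def hkL (k : YoungDiagram) (c : ℕ × ℕ) : Kqt :=
  1 - qq ^ armLen k c * tt ^ (legLen k c + 1)

/-- `[h_κ(c)]^a = 1 - q^{a+1} t^{ℓ}`. -/
noncomputable def hkA (k : YoungDiagram) (c : ℕ × ℕ) : Kqt :=
  1 - qq ^ (armLen k c + 1) * tt ^ legLen k c

/-- `b_κ(c)`. -/
noncomputable def bqt (k : YoungDiagram) (c : ℕ × ℕ) : Kqt := hkL k c / hkA k c

/-- cells of `r` in the row of the box `k/r` (the set ℛ_{κ/ρ}). -/
def rowCells (r k : YoungDiagram) : Finset (ℕ × ℕ) :=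
  r.cells.filter (fun c => c.1 = (diffBox r k).1)

/-- cells of `r` in the column of the box `k/r` (the set 𝒞_{κ/ρ}). -/
def colCells (r k : YoungDiagram) : Finset (ℕ × ℕ) :=
  r.cells.filter (fun c => c.2 = (diffBox r k).2)

/-- `ψ_{κ/ρ}(q,t)` for a single-box skew shape `κ/ρ`. -/
noncomputable def psiE (r k : YoungDiagram) : Kqt :=
  ∏ c ∈ rowCells r k \ colCells r k, bqt r c / bqt k c

/-- `φ_{κ/ρ}(q,t)` for a single-box skew shape `κ/ρ`. -/
noncomputable def phiE (r k : YoungDiagram) : Kqt :=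
  bqt k (diffBox r k) * ∏ c ∈ colCells r k, bqt k c / bqt r c

/-- `α_{κ/ρ}`. -/
noncomputable def alphaE (r k : YoungDiagram) : Kqt :=
  (∏ c ∈ rowCells r k, hkL r c / hkL k c) * ∏ c ∈ colCells r k, hkA r c / hkA k c

/-- `ᾱ_{κ/ρ}`. -/
noncomputable def alphaBarE (r k : YoungDiagram) : Kqt :=
  (∏ c ∈ rowCells r k, hkA r c / hkA k c) * ∏ c ∈ colCells r k, hkL r c / hkL k c

/-- `η_{ν/λ/μ}` in terms of the removed box `bm = λ/μ` and the added box `bn = ν/λ`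
(rows and columns here are 0-indexed, so e.g. `r_ν - r_μ = bn.1 - bm.1`). -/
noncomputable def etaE (bm bn : ℕ × ℕ) : Kqt :=
  (1 - qq) * (1 - tt) /
    ((1 - qq ^ ((bm.2 : ℤ) - bn.2) * tt ^ ((bn.1 : ℤ) - bm.1)) *
     (1 - qq ^ ((bm.2 : ℤ) - bn.2 + 1) * tt ^ ((bn.1 : ℤ) - bm.1 - 1)))

/-- `𝒫_λ(λ → ν) = t^{r_ν - 1} α_{ν/λ}` (0-indexed: `r_ν - 1 = (diffBox l n).1`). -/
noncomputable def Ptop (l n : YoungDiagram) : Kqt :=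
  tt ^ (diffBox l n).1 * alphaE l n

/-- `𝒫_λ(μ → ν)` for `μ ∈ 𝒟(λ)`. -/
noncomputable def Pmove (l m n : YoungDiagram) : Kqt :=
  tt ^ (((diffBox l n).1 : ℤ) - (diffBox m l).1 - 1) * (alphaE l n / alphaE m l) *
    etaE (diffBox m l) (diffBox l n)

/-- `𝒫̄_λ(λ ← ν) = t^{r_ν - 1} ᾱ_{ν/λ}`. -/
noncomputable def PbarTop (l n : YoungDiagram) : Kqt :=
  tt ^ (diffBox l n).1 * alphaBarE l n

/-- `𝒫̄_λ(μ ← ν)` for `μ ∈ 𝒟(λ)`. -/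
noncomputable def PbarMove (l m n : YoungDiagram) : Kqt :=
  tt ^ (((diffBox l n).1 : ℤ) - (diffBox m l).1 - 1) * (alphaBarE l n / alphaBarE m l) *
    etaE (diffBox m l) (diffBox l n)

/-- `ψ_T(q,t)` for a standard tableau encoded as a chain of shapes. -/
noncomputable def psiT (n : ℕ) (T : ℕ → YoungDiagram) : Kqt :=
  ∏ i ∈ Finset.range n, psiE (T i) (T (i + 1))

/-- `φ_T(q,t)` for a standard tableau encoded as a chain of shapes. -/
noncomputable def phiT (n : ℕ) (T : ℕ → YoungDiagram) : Kqt :=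
  ∏ i ∈ Finset.range n, phiE (T i) (T (i + 1))

/-- The up operator `U` on ℚ𝕐. -/
noncomputable def Uop : Module.End ℚ (YoungDiagram →₀ ℚ) :=
  Finsupp.lsum ℚ fun l => LinearMap.toSpanSingleton ℚ _
    (∑ n ∈ upFinset l, Finsupp.single n (1 : ℚ))

/-- The down operator `D` on ℚ𝕐. -/
noncomputable def Dop : Module.End ℚ (YoungDiagram →₀ ℚ) :=
  Finsupp.lsum ℚ fun l => LinearMap.toSpanSingleton ℚ _
    (∑ m ∈ downFinset l, Finsupp.single m (1 : ℚ))

/-- The (q,t)-up operator `U_{q,t}`. -/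
noncomputable def Uqt : Module.End Kqt (YoungDiagram →₀ Kqt) :=
  Finsupp.lsum Kqt fun l => LinearMap.toSpanSingleton Kqt _
    (∑ n ∈ upFinset l, Finsupp.single n (psiE l n))

/-- The (q,t)-down operator `D_{q,t}`. -/
noncomputable def Dqt : Module.End Kqt (YoungDiagram →₀ Kqt) :=
  Finsupp.lsum Kqt fun l => LinearMap.toSpanSingleton Kqt _
    (∑ m ∈ downFinset l, Finsupp.single m (phiE m l))

lemma diffBox_sdiff {m l : YoungDiagram} (h : YDCovers m l) :
    l.cells \ m.cells = {diffBox m l} := by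
  obtain ⟨hsub, hcard⟩ := h
  have hc : (l.cells \ m.cells).card = 1 := by
    rw [Finset.card_sdiff_of_subset hsub]; omega
  obtain ⟨a, ha⟩ := Finset.card_eq_one.mp hc
  rw [ha]
  congr 1
  rw [diffBox, ha, Finset.sup_singleton]
  rfl

lemma diffBox_mem_sdiff {m l : YoungDiagram} (h : YDCovers m l) :
    diffBox m l ∈ l.cells \ m.cells := by
  rw [diffBox_sdiff h]; exact Finset.mem_singleton_self _

lemma mem_of_ne_diffBox {m l : YoungDiagram} (h : YDCovers m l) {c : ℕ × ℕ}
    (hc : c ∈ l) (hne : c ≠ diffBox m l) : c ∈ m := by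
  by_contra hcm
  have : c ∈ l.cells \ m.cells := Finset.mem_sdiff.mpr ⟨hc, hcm⟩
  rw [diffBox_sdiff h, Finset.mem_singleton] at this
  exact hne this

/-- The removed box is a corner: the cell below it is not in `l`. -/
lemma diffBox_corner_below {m l : YoungDiagram} (h : YDCovers m l) :
    ((diffBox m l).1 + 1, (diffBox m l).2) ∉ l := by
  intro hmem
  have hne : ((diffBox m l).1 + 1, (diffBox m l).2) ≠ diffBox m l := by
    intro he; exact absurd (congrArg Prod.fst he) (by simp)
  have hmm := mem_of_ne_diffBox h hmem hne
  have hob := diffBox_mem_sdiff h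
  simp only [Finset.mem_sdiff, YoungDiagram.mem_cells] at hob
  exact hob.2 (m.up_left_mem (Nat.le_succ _) le_rfl hmm)

/-- The removed box is a corner: the cell to its right is not in `l`. -/
lemma diffBox_corner_right {m l : YoungDiagram} (h : YDCovers m l) :
    ((diffBox m l).1, (diffBox m l).2 + 1) ∉ l := by
  intro hmem
  have hne : ((diffBox m l).1, (diffBox m l).2 + 1) ≠ diffBox m l := by
    intro he; exact absurd (congrArg Prod.snd he) (by simp)
  have hmm := mem_of_ne_diffBox h hmem hne
  have hob := diffBox_mem_sdiff h
  simp only [Finset.mem_sdiff, YoungDiagram.mem_cells] at hob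
  exact hob.2 (m.up_left_mem le_rfl (Nat.le_succ _) hmm)

/-- Cells strictly above the added box (same column) are in `l`. -/
lemma diffBox_above_mem {l n : YoungDiagram} (h : YDCovers l n) {i : ℕ}
    (hi : i < (diffBox l n).1) : (i, (diffBox l n).2) ∈ l := by
  have hob := diffBox_mem_sdiff h
  simp only [Finset.mem_sdiff, YoungDiagram.mem_cells] at hob
  have hn : (i, (diffBox l n).2) ∈ n := n.up_left_mem (le_of_lt hi) le_rfl hob.1
  have hne : (i, (diffBox l n).2) ≠ diffBox l n := by
    intro he; exact absurd (congrArg Prod.fst he) (Nat.ne_of_lt hi)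
  exact mem_of_ne_diffBox h hn hne

/-- Cells strictly left of the added box (same row) are in `l`. -/
lemma diffBox_left_mem {l n : YoungDiagram} (h : YDCovers l n) {j : ℕ}
    (hj : j < (diffBox l n).2) : ((diffBox l n).1, j) ∈ l := by
  have hob := diffBox_mem_sdiff h
  simp only [Finset.mem_sdiff, YoungDiagram.mem_cells] at hob
  have hn : ((diffBox l n).1, j) ∈ n := n.up_left_mem le_rfl (le_of_lt hj) hob.1
  have hne : ((diffBox l n).1, j) ≠ diffBox l n := by
    intro he; exact absurd (congrArg Prod.snd he) (Nat.ne_of_lt hj)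
  exact mem_of_ne_diffBox h hn hne

/-- for `μ ∈ 𝒟(λ)` and `ν ∈ 𝒰(λ)` there is a unique cell of `λ`
lying in the row of `ν/λ` and the column of `λ/μ`, or in the column of `ν/λ` and
the row of `λ/μ`. -/
theorem cellC_exists_unique (l m n : YoungDiagram)
    (hm : YDCovers m l) (hn : YDCovers l n) :
    ∃! c : ℕ × ℕ, c ∈ l.cells ∧
      ((c.1 = (diffBox l n).1 ∧ c.2 = (diffBox m l).2) ∨
       (c.2 = (diffBox l n).2 ∧ c.1 = (diffBox m l).1)) := by 
  set bm := diffBox m l with hbm_def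
  set bn := diffBox l n with hbn_def
  have hbm : bm ∈ l ∧ bm ∉ m := by
    have := diffBox_mem_sdiff hm
    simpa [Finset.mem_sdiff, YoungDiagram.mem_cells] using this
  have hbn : bn ∈ n ∧ bn ∉ l := by
    have := diffBox_mem_sdiff hn
    simpa [Finset.mem_sdiff, YoungDiagram.mem_cells] using this
  -- candidate cells
  have key : ((bn.1, bm.2) ∈ l ∧ (bm.1, bn.2) ∉ l) ∨
      ((bm.1, bn.2) ∈ l ∧ (bn.1, bm.2) ∉ l) := by
    rcases le_or_gt bn.1 bm.1 with hle | hlt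
    · left
      constructor
      · exact l.up_left_mem hle le_rfl hbm.1
      · intro hin
        have : (bn.1, bn.2) ∈ l := l.up_left_mem hle le_rfl hin
        exact hbn.2 (by simpa using this)
    · right
      have hcol : bn.2 ≤ bm.2 := by
        by_contra hgt
        push_neg at hgt
        have h1 : (bn.1, bm.2) ∈ l := diffBox_left_mem hn hgt
        have h2 : (bm.1 + 1, bm.2) ∈ l := l.up_left_mem hlt le_rfl h1
        exact diffBox_corner_below hm h2
      constructor
      · exact l.up_left_mem le_rfl hcol hbm.1
      · intro hin
        have h2 : (bm.1 + 1, bm.2) ∈ l := l.up_left_mem hlt le_rfl hin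
        exact diffBox_corner_below hm h2
  rcases key with ⟨h1, h2⟩ | ⟨h1, h2⟩
  · refine ⟨(bn.1, bm.2), ⟨by simpa [YoungDiagram.mem_cells] using h1, Or.inl ⟨rfl, rfl⟩⟩, ?_⟩
    rintro ⟨a, b⟩ ⟨hcl, hc | hc⟩
    · obtain ⟨ha, hb⟩ := hc; simp_all
    · obtain ⟨ha, hb⟩ := hc
      exfalso
      apply h2
      have ha' : b = bn.2 := ha
      have hb' : a = bm.1 := hb
      subst ha'; subst hb'
      rwa [YoungDiagram.mem_cells] at hcl
  · refine ⟨(bm.1, bn.2), ⟨by simpa [YoungDiagram.mem_cells] using h1, Or.inr ⟨rfl, rfl⟩⟩, ?_⟩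
    rintro ⟨a, b⟩ ⟨hcl, hc | hc⟩
    · obtain ⟨ha, hb⟩ := hc
      exfalso
      apply h2
      have ha' : a = bn.1 := ha
      have hb' : b = bm.2 := hb
      subst ha'; subst hb'
      rwa [YoungDiagram.mem_cells] at hcl
    · obtain ⟨ha, hb⟩ := hc; simp_all
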